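/- If X ∈ H is lower bounded and independent of F_n (i.e., E(φ(I_A, X)) = E(ψ(I_A)) with ψ(x) = E(φ(x,X)) for all A ∈ F_n and admissible φ; equivalently E(I_A X) = E(I_A E(X)) for all A ∈ F_n after shifting X to be nonnegative), then E_n(X) = E(X) quasi-surely. -/
import Mathlib


open MeasureTheory Filter Set

/-- An `F_t`-consistent sublinear expectation (`SL`-expectation) in discrete time:
a filtration `F t` of sub-σ-algebras, a space `H` of measurable real functions closed
under constants, `|·|`, addition, scalar multiplication and multiplication by indicators,
and conditional expectations `Et t : H → H ∩ mF_t` satisfying monotonicity, the tower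
property, locality, projection, sub-additivity, positive homogeneity and the monotone
continuity (Fatou) property.  `E := Et 0` is identified with a real-valued functional. -/
structure CondSLExp (Ω : Type*) [m : MeasurableSpace Ω] where
  F : ℕ → MeasurableSpace Ω
  F_le : ∀ t, F t ≤ m
  F_mono : Monotone F
  H : Set (Ω → ℝ)
  H_meas : ∀ X ∈ H, Measurable X
  const_mem : ∀ c : ℝ, (fun _ => c) ∈ H
  abs_mem : ∀ X ∈ H, (fun ω => |X ω|) ∈ H
  add_mem : ∀ X ∈ H, ∀ Y ∈ H, X + Y ∈ H
  smul_mem : ∀ (c : ℝ), ∀ X ∈ H, c • X ∈ H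
  indmul_mem : ∀ (A : Set Ω), MeasurableSet A → ∀ X ∈ H, A.indicator X ∈ H
  Et : ℕ → (Ω → ℝ) → (Ω → ℝ)
  E : (Ω → ℝ) → ℝ
  E0_eq : ∀ X ∈ H, ∀ ω, Et 0 X ω = E X
  Et_mem : ∀ t, ∀ X ∈ H, Et t X ∈ H
  Et_meas : ∀ t, ∀ X ∈ H, Measurable[F t] (Et t X)
  mono : ∀ t, ∀ X ∈ H, ∀ Y ∈ H, (∀ ω, X ω ≤ Y ω) → ∀ ω, Et t X ω ≤ Et t Y ω
  tower : ∀ s t : ℕ, s ≤ t → ∀ Y ∈ H, Et s (Et t Y) = Et s Y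
  locality : ∀ (t : ℕ) (A : Set Ω), MeasurableSet[F t] A → ∀ Y ∈ H,
      Et t (A.indicator Y) = A.indicator (Et t Y)
  proj : ∀ t, ∀ Y ∈ H, Measurable[F t] Y → Et t Y = Y
  subadd : ∀ t, ∀ X ∈ H, ∀ Y ∈ H, ∀ ω, Et t (X + Y) ω ≤ Et t X ω + Et t Y ω
  poshom : ∀ (t : ℕ) (lam : Ω → ℝ), lam ∈ H → Measurable[F t] lam → ∀ Y ∈ H,
      (fun ω => lam ω * Y ω) ∈ H →
      ∀ ω, Et t (fun ω' => lam ω' * Y ω') ω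
        = max (lam ω) 0 * Et t Y ω + max (-(lam ω)) 0 * Et t (fun ω' => -(Y ω')) ω
  fatou : ∀ X : ℕ → Ω → ℝ, (∀ i, X i ∈ H) → (∀ ω, Antitone fun i => X i ω) →
      (∀ ω, Tendsto (fun i => X i ω) atTop (nhds 0)) →
      Tendsto (fun i => E (X i)) atTop (nhds 0)

variable {Ω : Type*} [MeasurableSpace Ω]

/-- The upper capacity `V(A) := E(I_A)`. -/
noncomputable def CondSLExp.V (S : CondSLExp Ω) (A : Set Ω) : ℝ :=
  S.E (A.indicator fun _ => (1 : ℝ))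

/-- A property holds quasi-surely if it holds outside a set `N` with `E(I_N) = 0`. -/
def CondSLExp.QS (S : CondSLExp Ω) (P : Ω → Prop) : Prop :=
  ∃ N : Set Ω, S.V N = 0 ∧ ∀ ω ∉ N, P ω

/-- `X` is independent of `F n`: `X` is independent of `I_A` under `E` for every
`A ∈ F n`, i.e. `E(φ(I_A, X)) = E(φ̄(I_A))` where `φ̄(x) := E(φ(x, X))`. -/
def CondSLExp.IndepOf (S : CondSLExp Ω) (X : Ω → ℝ) (n : ℕ) : Prop :=
  ∀ A : Set Ω, MeasurableSet[S.F n] A → ∀ φ : ℝ → ℝ → ℝ,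
    (fun ω => φ (A.indicator (fun _ => (1 : ℝ)) ω) (X ω)) ∈ S.H →
    (∀ x : ℝ, (fun ω => φ x (X ω)) ∈ S.H) →
    (fun ω => S.E fun ω' => φ (A.indicator (fun _ => (1 : ℝ)) ω) (X ω')) ∈ S.H →
    S.E (fun ω => φ (A.indicator (fun _ => (1 : ℝ)) ω) (X ω)) =
      S.E (fun ω => S.E fun ω' => φ (A.indicator (fun _ => (1 : ℝ)) ω) (X ω'))

/-- Membership in `L_b¹`, via the characterization
`L_b¹ = {X ∈ L¹ : lim_n E(|X| I_{|X|>n}) = 0}`. -/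
def CondSLExp.InLb1 (S : CondSLExp Ω) (X : Ω → ℝ) : Prop :=
  Tendsto (fun n : ℕ => S.E fun ω => if (n : ℝ) < |X ω| then |X ω| else 0)
    atTop (nhds 0)


namespace CondSLExp

variable {Ω : Type*} [MeasurableSpace Ω] (S : CondSLExp Ω)

lemma mem_congr {f g : Ω → ℝ} (h : ∀ ω, f ω = g ω) (hf : f ∈ S.H) : g ∈ S.H := by
  have : f = g := funext h
  exact this ▸ hf

lemma smul_mem' (c : ℝ) {f : Ω → ℝ} (hf : f ∈ S.H) : (fun ω => c * f ω) ∈ S.H :=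
  S.mem_congr (fun ω => rfl) (S.smul_mem c f hf)

lemma add_mem' {f g : Ω → ℝ} (hf : f ∈ S.H) (hg : g ∈ S.H) :
    (fun ω => f ω + g ω) ∈ S.H :=
  S.mem_congr (fun ω => rfl) (S.add_mem f hf g hg)

lemma sub_const_mem {f : Ω → ℝ} (hf : f ∈ S.H) (c : ℝ) : (fun ω => f ω - c) ∈ S.H := by
  have := S.add_mem' hf (S.const_mem (-c))
  exact S.mem_congr (fun ω => by ring) this

lemma max_zero_mem {f : Ω → ℝ} (hf : f ∈ S.H) : (fun ω => max (f ω) 0) ∈ S.H := by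
  have h1 : (fun ω => (1/2 : ℝ) * (f ω + |f ω|)) ∈ S.H :=
    S.smul_mem' _ (S.add_mem' hf (S.abs_mem f hf))
  refine S.mem_congr (f := fun ω => (1/2 : ℝ) * (f ω + |f ω|)) (fun ω => ?_) h1
  show (1/2 : ℝ) * (f ω + |f ω|) = max (f ω) 0
  rcases le_total (f ω) 0 with h | h
  · rw [max_eq_right h, abs_of_nonpos h]; ring
  · rw [max_eq_left h, abs_of_nonneg h]; ring

lemma E_zero : S.E (fun _ => (0 : ℝ)) = 0 := by
  have h := S.fatou (fun _ _ => 0) (fun _ => S.const_mem 0)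
    (fun ω i j _ => le_rfl) (fun ω => tendsto_const_nhds)
  exact tendsto_nhds_unique tendsto_const_nhds h

lemma E_const [Nonempty Ω] (c : ℝ) : S.E (fun _ => c) = c := by
  obtain ⟨ω₀⟩ := ‹Nonempty Ω›
  have h := S.E0_eq _ (S.const_mem c) ω₀
  rw [S.proj 0 _ (S.const_mem c) measurable_const] at h
  exact h.symm

lemma E_mono [Nonempty Ω] {f g : Ω → ℝ} (hf : f ∈ S.H) (hg : g ∈ S.H)
    (h : ∀ ω, f ω ≤ g ω) : S.E f ≤ S.E g := by
  obtain ⟨ω₀⟩ := ‹Nonempty Ω›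
  have h2 := S.mono 0 f hf g hg h ω₀
  rwa [S.E0_eq f hf ω₀, S.E0_eq g hg ω₀] at h2

lemma E_subadd [Nonempty Ω] {f g : Ω → ℝ} (hf : f ∈ S.H) (hg : g ∈ S.H) :
    S.E (fun ω => f ω + g ω) ≤ S.E f + S.E g := by
  obtain ⟨ω₀⟩ := ‹Nonempty Ω›
  have h2 := S.subadd 0 f hf g hg ω₀
  have e1 : f + g = fun ω => f ω + g ω := rfl
  rw [e1, S.E0_eq _ (S.add_mem' hf hg) ω₀, S.E0_eq f hf ω₀, S.E0_eq g hg ω₀] at h2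
  exact h2

lemma E_smul [Nonempty Ω] {f : Ω → ℝ} (hf : f ∈ S.H) {k : ℝ} (hk : 0 ≤ k) :
    S.E (fun ω => k * f ω) = k * S.E f := by
  obtain ⟨ω₀⟩ := ‹Nonempty Ω›
  have h := S.poshom 0 (fun _ => k) (S.const_mem k) measurable_const f hf
    (S.smul_mem' k hf) ω₀
  simp only [max_eq_left hk, max_eq_right (neg_nonpos.mpr hk), zero_mul, add_zero] at h
  rwa [S.E0_eq _ (S.smul_mem' k hf) ω₀, S.E0_eq f hf ω₀] at h

lemma Et_add_const (t : ℕ) {f : Ω → ℝ} (hf : f ∈ S.H) (c : ℝ) (ω : Ω) :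
    S.Et t (fun ω' => f ω' + c) ω = S.Et t f ω + c := by
  have hfc : (fun ω' => f ω' + c) ∈ S.H := S.add_mem' hf (S.const_mem c)
  have h1 := S.subadd t f hf (fun _ => c) (S.const_mem c) ω
  simp only [S.proj t _ (S.const_mem c) measurable_const] at h1
  have h2 := S.subadd t (fun ω' => f ω' + c) hfc (fun _ => -c) (S.const_mem (-c)) ω
  simp only [S.proj t _ (S.const_mem (-c)) measurable_const] at h2
  have e1 : f + (fun _ => c) = fun ω' => f ω' + c := rfl
  have e2 : (fun ω' => f ω' + c) + (fun _ => -c) = f := by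
    funext ω'; show (f ω' + c) + (-c) = f ω'; ring
  rw [e1] at h1
  rw [e2] at h2
  linarith

lemma Et_sub_const (t : ℕ) {f : Ω → ℝ} (hf : f ∈ S.H) (c : ℝ) (ω : Ω) :
    S.Et t (fun ω' => f ω' - c) ω = S.Et t f ω - c := by
  have e1 : (fun ω' => f ω' - c) = fun ω' => f ω' + (-c) := by funext ω'; ring
  rw [e1, S.Et_add_const t hf (-c) ω]; ring

lemma E_add_const [Nonempty Ω] {f : Ω → ℝ} (hf : f ∈ S.H) (c : ℝ) :
    S.E (fun ω => f ω + c) = S.E f + c := by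
  obtain ⟨ω₀⟩ := ‹Nonempty Ω›
  have h := S.Et_add_const 0 hf c ω₀
  rwa [S.E0_eq _ (S.add_mem' hf (S.const_mem c)) ω₀, S.E0_eq f hf ω₀] at h

lemma E_sub_const [Nonempty Ω] {f : Ω → ℝ} (hf : f ∈ S.H) (c : ℝ) :
    S.E (fun ω => f ω - c) = S.E f - c := by
  have e1 : (fun ω => f ω - c) = fun ω => f ω + (-c) := by funext ω; ring
  rw [e1, S.E_add_const hf (-c)]; ring

lemma V_nonneg [Nonempty Ω] {A : Set Ω} (hA : MeasurableSet A) : 0 ≤ S.V A := by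
  have h := S.E_mono (S.const_mem 0) (S.indmul_mem A hA _ (S.const_mem 1))
    (fun ω => Set.indicator_nonneg (fun _ _ => zero_le_one) ω)
  rwa [S.E_const 0] at h

lemma E_ind_const [Nonempty Ω] {A : Set Ω} (hA : MeasurableSet A) {k : ℝ} (hk : 0 ≤ k) :
    S.E (A.indicator fun _ => k) = k * S.V A := by
  have h : A.indicator (fun _ => k) = fun ω => k * A.indicator (fun _ => (1:ℝ)) ω := by
    funext ω; by_cases h : ω ∈ A <;>
      simp [Set.indicator_of_mem, Set.indicator_of_notMem, h]
  rw [h, S.E_smul (S.indmul_mem A hA _ (S.const_mem 1)) hk]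
  rfl

end CondSLExp

/-- if `X ∈ H` is lower bounded and independent of `F_n`, then
`E_n(X) = E(X)` quasi-surely. -/
theorem condExp_eq_of_indep_lowerBdd (S : CondSLExp Ω) (n : ℕ) (X : Ω → ℝ)
    (hX : X ∈ S.H) (hlb : ∃ c : ℝ, ∀ ω, c ≤ X ω)
    (hind : S.IndepOf X n) :
    S.QS fun ω => S.Et n X ω = S.E X := by
  rcases isEmpty_or_nonempty Ω with hΩ | hΩ
  · refine ⟨∅, ?_, fun ω _ => (hΩ.false ω).elim⟩
    have : (∅ : Set Ω).indicator (fun _ => (1:ℝ)) = fun _ => 0 := by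
      funext ω; simp
    rw [CondSLExp.V, this, S.E_zero]
  obtain ⟨c, hc⟩ := hlb
  set Y := S.Et n X with hYdef
  set e := S.E X with hedef
  have hYH : Y ∈ S.H := S.Et_mem n X hX
  have hYm : Measurable[S.F n] Y := S.Et_meas n X hX
  have hYmm : Measurable Y := S.H_meas Y hYH
  have hcY : ∀ ω, c ≤ Y ω := by
    intro ω
    have h := S.mono n _ (S.const_mem c) X hX hc ω
    rwa [S.proj n _ (S.const_mem c) measurable_const] at h
  have hce : c ≤ e := by
    have h := S.E_mono (S.const_mem c) hX hc
    rwa [S.E_const c] at h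
  have hXc : (fun ω => X ω - c) ∈ S.H := S.sub_const_mem hX c
  have hEXc : S.E (fun ω => X ω - c) = e - c := S.E_sub_const hX c
  have hYc : (fun ω => Y ω - c) ∈ S.H := S.sub_const_mem hYH c
  -- key identity: for A ∈ F n, E(I_A (Y - c)) = (e - c) * V A
  have key : ∀ A : Set Ω, MeasurableSet[S.F n] A →
      S.E (A.indicator fun ω => Y ω - c) = (e - c) * S.V A := by
    intro A hA
    have hAm : MeasurableSet A := S.F_le n A hA
    set IA := A.indicator (fun _ => (1:ℝ)) with hIA
    have hindXc : A.indicator (fun ω => X ω - c) ∈ S.H := S.indmul_mem A hAm _ hXc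
    have hm1eq : ∀ ω, A.indicator (fun ω => X ω - c) ω = IA ω * (X ω - c) := by
      intro ω; by_cases h : ω ∈ A <;>
        simp [hIA, Set.indicator_of_mem, Set.indicator_of_notMem, h]
    have hm1 : (fun ω => IA ω * (X ω - c)) ∈ S.H := S.mem_congr hm1eq hindXc
    have hm2 : ∀ x : ℝ, (fun ω => x * (X ω - c)) ∈ S.H := fun x => S.smul_mem' x hXc
    have hEind : ∀ ω, A.indicator (fun _ => e - c) ω = S.E fun ω' => IA ω * (X ω' - c) := by
      intro ω; by_cases h : ω ∈ A
      · have h1 : IA ω = 1 := by simp [hIA, Set.indicator_of_mem h]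
        have h2 : (fun ω' => IA ω * (X ω' - c)) = fun ω' => X ω' - c := by
          funext ω'; rw [h1]; ring
        rw [Set.indicator_of_mem h, h2, hEXc]
      · have h1 : IA ω = 0 := by simp [hIA, Set.indicator_of_notMem h]
        have h2 : (fun ω' => IA ω * (X ω' - c)) = fun _ => (0:ℝ) := by
          funext ω'; rw [h1]; ring
        rw [Set.indicator_of_notMem h, h2, S.E_zero]
    have hm3 : (fun ω => S.E fun ω' => IA ω * (X ω' - c)) ∈ S.H :=
      S.mem_congr hEind (S.indmul_mem A hAm _ (S.const_mem (e - c)))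
    have hind' := hind A hA (fun x y => x * (y - c)) hm1 hm2 hm3
    have hL : S.E (fun ω => IA ω * (X ω - c)) = S.E (A.indicator fun ω => X ω - c) := by
      rw [show (fun ω => IA ω * (X ω - c)) = A.indicator fun ω => X ω - c from
        (funext hm1eq).symm]
    have hR : S.E (fun ω => S.E fun ω' => IA ω * (X ω' - c)) = (e - c) * S.V A := by
      rw [show (fun ω => S.E fun ω' => IA ω * (X ω' - c))
          = A.indicator (fun _ => e - c) from (funext hEind).symm]
      exact S.E_ind_const hAm (by linarith)
    have htow : S.E (A.indicator fun ω => X ω - c) = S.E (A.indicator fun ω => Y ω - c) := by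
      have h1 : S.Et n (A.indicator fun ω => X ω - c) = A.indicator (fun ω => Y ω - c) := by
        rw [S.locality n A hA _ hXc,
          show S.Et n (fun ω => X ω - c) = fun ω => Y ω - c from
            funext fun ω => S.Et_sub_const n hX c ω]
      have h2 := S.tower 0 n (Nat.zero_le n) _ hindXc
      rw [h1] at h2
      obtain ⟨ω₀⟩ := hΩ
      have e1 := S.E0_eq _ hindXc ω₀
      have e2 := S.E0_eq _ (S.indmul_mem A hAm _ hYc) ω₀
      rw [← e1, ← e2, h2]
    rw [← htow, ← hL, hind', hR]
  -- V of deviation sets is zero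
  have VC : ∀ ε : ℝ, 0 < ε → S.V {ω | ε ≤ |Y ω - e|} = 0 := by
    intro ε hε
    set A := {ω | e + ε ≤ Y ω} with hAdef
    set B := {ω | Y ω ≤ e - ε} with hBdef
    have hAn : MeasurableSet[S.F n] A := measurableSet_le measurable_const hYm
    have hBn : MeasurableSet[S.F n] B := measurableSet_le hYm measurable_const
    have hAm : MeasurableSet A := S.F_le n A hAn
    have hBm : MeasurableSet B := S.F_le n B hBn
    have hIAH : A.indicator (fun ω => Y ω - c) ∈ S.H := S.indmul_mem A hAm _ hYc
    have hIBH : B.indicator (fun ω => Y ω - c) ∈ S.H := S.indmul_mem B hBm _ hYc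
    have hVA : S.V A = 0 := by
      have hnn : 0 ≤ S.V A := S.V_nonneg hAm
      have h1 : S.E (A.indicator fun _ => e - c + ε) ≤ S.E (A.indicator fun ω => Y ω - c) := by
        refine S.E_mono (S.indmul_mem A hAm _ (S.const_mem _)) hIAH fun ω => ?_
        by_cases h : ω ∈ A
        · rw [Set.indicator_of_mem h, Set.indicator_of_mem h]
          have : e + ε ≤ Y ω := h
          linarith
        · rw [Set.indicator_of_notMem h, Set.indicator_of_notMem h]
      rw [S.E_ind_const hAm (by linarith), key A hAn] at h1
      nlinarith
    have hVB : S.V B = 0 := by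
      have hnn : 0 ≤ S.V B := S.V_nonneg hBm
      by_cases hk : 0 ≤ e - c - ε
      · have h1 : S.E (B.indicator fun ω => Y ω - c) ≤ S.E (B.indicator fun _ => e - c - ε) := by
          refine S.E_mono hIBH (S.indmul_mem B hBm _ (S.const_mem _)) fun ω => ?_
          by_cases h : ω ∈ B
          · rw [Set.indicator_of_mem h, Set.indicator_of_mem h]
            have : Y ω ≤ e - ε := h
            linarith
          · rw [Set.indicator_of_notMem h, Set.indicator_of_notMem h]
        rw [S.E_ind_const hBm hk, key B hBn] at h1
        nlinarith
      · have hBe : B = ∅ := by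
          ext ω
          simp only [hBdef, Set.mem_setOf_eq, Set.mem_empty_iff_false, iff_false, not_le]
          have := hcY ω
          linarith [not_le.mp hk]
        rw [hBe, CondSLExp.V,
          show (∅ : Set Ω).indicator (fun _ => (1:ℝ)) = fun _ => 0 from funext fun ω => by simp,
          S.E_zero]
    set C := {ω | ε ≤ |Y ω - e|} with hCdef
    have hCm : MeasurableSet C :=
      measurableSet_le measurable_const ((hYmm.sub measurable_const).abs)
    have hnnC : 0 ≤ S.V C := S.V_nonneg hCm
    have hsub : ∀ ω, C.indicator (fun _ => (1:ℝ)) ω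
        ≤ A.indicator (fun _ => (1:ℝ)) ω + B.indicator (fun _ => (1:ℝ)) ω := by
      intro ω
      by_cases h : ω ∈ C
      · rw [Set.indicator_of_mem h]
        have hC : ε ≤ |Y ω - e| := h
        rcases le_total (Y ω) e with hle | hle
        · have hB : ω ∈ B := by
            simp only [hBdef, Set.mem_setOf_eq]
            rw [abs_of_nonpos (by linarith)] at hC
            linarith
          rw [Set.indicator_of_mem hB]
          have := Set.indicator_nonneg (fun _ _ => (zero_le_one : (0:ℝ) ≤ 1)) (s := A) ω
          linarith
        · have hA : ω ∈ A := by
            simp only [hAdef, Set.mem_setOf_eq]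
            rw [abs_of_nonneg (by linarith)] at hC
            linarith
          rw [Set.indicator_of_mem hA]
          have := Set.indicator_nonneg (fun _ _ => (zero_le_one : (0:ℝ) ≤ 1)) (s := B) ω
          linarith
      · rw [Set.indicator_of_notMem h]
        have h1 := Set.indicator_nonneg (fun _ _ => (zero_le_one : (0:ℝ) ≤ 1)) (s := A) ω
        have h2 := Set.indicator_nonneg (fun _ _ => (zero_le_one : (0:ℝ) ≤ 1)) (s := B) ω
        linarith
    have hone : ∀ (D : Set Ω), MeasurableSet D → D.indicator (fun _ => (1:ℝ)) ∈ S.H :=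
      fun D hD => S.indmul_mem D hD _ (S.const_mem 1)
    have h1 : S.V C ≤ S.E (fun ω => A.indicator (fun _ => (1:ℝ)) ω
        + B.indicator (fun _ => (1:ℝ)) ω) :=
      S.E_mono (hone C hCm) (S.add_mem' (hone A hAm) (hone B hBm)) hsub
    have h2 := S.E_subadd (hone A hAm) (hone B hBm)
    have : S.V C ≤ S.V A + S.V B := le_trans h1 h2
    rw [hVA, hVB] at this
    linarith
  -- E |Y - e| = 0
  have hZH : (fun ω => |Y ω - e|) ∈ S.H := S.abs_mem _ (S.sub_const_mem hYH e)
  have hEZ : S.E (fun ω => |Y ω - e|) = 0 := by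
    have hnn : 0 ≤ S.E (fun ω => |Y ω - e|) := by
      have h := S.E_mono (S.const_mem 0) hZH (fun ω => abs_nonneg _)
      rwa [S.E_const 0] at h
    have hub : ∀ ε : ℝ, 0 < ε → S.E (fun ω => |Y ω - e|) ≤ 0 + ε := by
      intro ε hε
      set C := {ω | ε ≤ |Y ω - e|} with hCdef
      have habs : Measurable[S.F n] fun ω => |Y ω - e| := by
        have h1 : Measurable[S.F n] fun ω => Y ω - e :=
          Measurable.sub hYm (@measurable_const ℝ Ω _ (S.F n) e)
        exact measurable_abs.comp h1
      have hCn : MeasurableSet[S.F n] C := habs measurableSet_Ici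
      have hCm : MeasurableSet C := S.F_le n C hCn
      have hVC0 : S.V C = 0 := VC ε hε
      have hkeyC : S.E (C.indicator fun ω => Y ω - c) = 0 := by
        rw [key C hCn, hVC0, mul_zero]
      have hIC1 : C.indicator (fun ω => Y ω - c) ∈ S.H := S.indmul_mem C hCm _ hYc
      have hIC2 : C.indicator (fun _ => e - c) ∈ S.H :=
        S.indmul_mem C hCm _ (S.const_mem _)
      have hg : (fun ω => C.indicator (fun ω => Y ω - c) ω
          + C.indicator (fun _ => e - c) ω) ∈ S.H := S.add_mem' hIC1 hIC2
      have hpt : ∀ ω, |Y ω - e| ≤ (fun ω => C.indicator (fun ω => Y ω - c) ω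
          + C.indicator (fun _ => e - c) ω) ω + ε := by
        intro ω
        show |Y ω - e| ≤ C.indicator (fun ω => Y ω - c) ω + C.indicator (fun _ => e - c) ω + ε
        by_cases h : ω ∈ C
        · rw [Set.indicator_of_mem h, Set.indicator_of_mem h]
          have h1 := hcY ω
          have h2 := abs_le.mpr (⟨by linarith, by linarith⟩ :
            -((Y ω - c) + (e - c)) ≤ Y ω - e ∧ Y ω - e ≤ (Y ω - c) + (e - c))
          linarith
        · rw [Set.indicator_of_notMem h, Set.indicator_of_notMem h]
          have : ¬ ε ≤ |Y ω - e| := h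
          linarith [not_le.mp this]
      have h1 : S.E (fun ω => |Y ω - e|)
          ≤ S.E (fun ω => (fun ω => C.indicator (fun ω => Y ω - c) ω
            + C.indicator (fun _ => e - c) ω) ω + ε) :=
        S.E_mono hZH (S.add_mem' hg (S.const_mem ε)) hpt
      rw [S.E_add_const hg ε] at h1
      have h2 := S.E_subadd hIC1 hIC2
      rw [hkeyC, S.E_ind_const hCm (by linarith), hVC0, mul_zero, zero_add] at h2
      linarith
    have := le_of_forall_pos_le_add hub
    linarith
  -- conclude via Fatou
  set N := {ω | Y ω ≠ e} with hNdef
  have hNm : MeasurableSet N := by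
    have h : MeasurableSet {ω | Y ω = e} := hYmm (measurableSet_singleton e)
    have : N = {ω | Y ω = e}ᶜ := by ext ω; simp [hNdef]
    rw [this]; exact h.compl
  have hINH : N.indicator (fun _ => (1:ℝ)) ∈ S.H := S.indmul_mem N hNm _ (S.const_mem 1)
  set W : ℕ → Ω → ℝ :=
    fun i ω => max (N.indicator (fun _ => (1:ℝ)) ω - i * |Y ω - e|) 0 with hWdef
  have hWH : ∀ i, W i ∈ S.H := by
    intro i
    have hin : (fun ω => N.indicator (fun _ => (1:ℝ)) ω - i * |Y ω - e|) ∈ S.H := by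
      refine S.mem_congr (f := fun ω => N.indicator (fun _ => (1:ℝ)) ω
        + (-(i:ℝ)) * |Y ω - e|) (fun ω => by ring) ?_
      exact S.add_mem' hINH (S.smul_mem' _ hZH)
    exact S.max_zero_mem hin
  have hanti : ∀ ω, Antitone fun i => W i ω := by
    intro ω i j hij
    refine max_le_max (sub_le_sub_left ?_ _) le_rfl
    exact mul_le_mul_of_nonneg_right (Nat.cast_le.mpr hij) (abs_nonneg _)
  have htend : ∀ ω, Tendsto (fun i => W i ω) atTop (nhds 0) := by
    intro ω
    by_cases hω : Y ω = e
    · have hnm : ω ∉ N := by simp [hNdef, hω]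
      have hz : ∀ i, W i ω = 0 := by
        intro i
        simp [hWdef, Set.indicator_of_notMem hnm, hω]
      exact tendsto_const_nhds.congr fun i => (hz i).symm
    · have hz : 0 < |Y ω - e| := abs_pos.mpr (sub_ne_zero.mpr hω)
      obtain ⟨i₀, hi₀⟩ := exists_nat_ge (1 / |Y ω - e|)
      have hev : ∀ i ≥ i₀, W i ω = 0 := by
        intro i hi
        have hiz : (1:ℝ) ≤ i * |Y ω - e| := by
          have h1 : (1 / |Y ω - e|) * |Y ω - e| ≤ (i : ℝ) * |Y ω - e| :=
            mul_le_mul_of_nonneg_right (le_trans hi₀ (Nat.cast_le.mpr hi)) (abs_nonneg _)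
          rwa [one_div_mul_cancel (ne_of_gt hz)] at h1
        have hle1 : N.indicator (fun _ => (1:ℝ)) ω ≤ 1 := by
          by_cases h : ω ∈ N
          · rw [Set.indicator_of_mem h]
          · rw [Set.indicator_of_notMem h]; linarith
        exact max_eq_right (by linarith)
      refine tendsto_const_nhds.congr' ?_
      filter_upwards [eventually_ge_atTop i₀] with i hi
      exact (hev i hi).symm
  have hfat := S.fatou W hWH hanti htend
  have hVle : ∀ i : ℕ, S.V N ≤ S.E (W i) := by
    intro i
    have hpt : ∀ ω, N.indicator (fun _ => (1:ℝ)) ω ≤ W i ω + (i:ℝ) * |Y ω - e| := by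
      intro ω
      have := le_max_left (N.indicator (fun _ => (1:ℝ)) ω - i * |Y ω - e|) (0:ℝ)
      have h2 : N.indicator (fun _ => (1:ℝ)) ω - i * |Y ω - e| ≤ W i ω := this
      linarith
    have hiZH : (fun ω => (i:ℝ) * |Y ω - e|) ∈ S.H := S.smul_mem' _ hZH
    have h1 : S.V N ≤ S.E (fun ω => W i ω + (i:ℝ) * |Y ω - e|) :=
      S.E_mono hINH (S.add_mem' (hWH i) hiZH) hpt
    have h2 := S.E_subadd (hWH i) hiZH
    rw [S.E_smul hZH (Nat.cast_nonneg i), hEZ, mul_zero, add_zero] at h2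
    exact le_trans h1 h2
  have hVN : S.V N ≤ 0 := ge_of_tendsto hfat (Eventually.of_forall hVle)
  refine ⟨N, le_antisymm hVN (S.V_nonneg hNm), fun ω hω => ?_⟩
  have : ¬ Y ω ≠ e := hω
  exact not_not.mp this
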